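/- Let X be a finite set with symmetric non-negative function d_X and δ ≥ 0, and let X^δ denote X with the function d_X^δ(x,x') = d_X(x,x') + δ. Then for all a ∈ ℝ≥0: ker⁺_{a+δ}(X^δ) = ker⁺_a(X) and ker⁻_{a+δ}(X^δ) = ker⁻_a(X); consequently the barcode of X^δ is the barcode of X shifted by δ: m^{X^δ}(a + δ) = m^X(a) for all a > 0. -/

import Mathlib

open scoped NNReal
open Module

/-- 1-skeleton of the Vietoris–Rips filtration of `(Z, d)`: edgeless at `r = 0`;
for `r > 0` it has an edge between distinct points at distance at most `r`.
(The adjacency is symmetrized; for symmetric `d` this agrees with the usual definition.) -/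
def VR {Z : Type*} (d : Z → Z → ℝ≥0) (r : ℝ≥0) : SimpleGraph Z where
  Adj z z' := z ≠ z' ∧ 0 < r ∧ d z z' ≤ r ∧ d z' z ≤ r
  symm := ⟨by intro z z' h; exact ⟨h.1.symm, h.2.1, h.2.2.2, h.2.2.1⟩⟩
  loopless := ⟨by intro z h; exact h.1 rfl⟩

/-- "Closed" Vietoris–Rips graph, used for `ker⁺`: at `r = 0` it has the edges between
distinct points at distance `0`; for `r > 0` it coincides with `VR d r`. -/
def VRc {Z : Type*} (d : Z → Z → ℝ≥0) (r : ℝ≥0) : SimpleGraph Z where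
  Adj z z' := z ≠ z' ∧ d z z' ≤ r ∧ d z' z ≤ r
  symm := ⟨by intro z z' h; exact ⟨h.1.symm, h.2.2, h.2.1⟩⟩
  loopless := ⟨by intro z h; exact h.1 rfl⟩

lemma VR_mono {Z : Type*} (d : Z → Z → ℝ≥0) {r s : ℝ≥0} (hrs : r ≤ s) :
    VR d r ≤ VR d s := by
  intro a b hab
  exact ⟨hab.1, hab.2.1.trans_le hrs, hab.2.2.1.trans hrs, hab.2.2.2.trans hrs⟩

/-- The structure map `ρ` from `H₀` of the edgeless graph on `Z` (the free `𝔽₂`-vector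
space on `Z`, identified with `Z → 𝔽₂`) to `H₀(G)` (the free `𝔽₂`-vector space on the
connected components of `G`), summing the coefficients over each connected component. -/
noncomputable def rho {Z : Type*} [Fintype Z] (G : SimpleGraph Z) :
    (Z → ZMod 2) →ₗ[ZMod 2] (G.ConnectedComponent → ZMod 2) where
  toFun v c :=
    ∑ z ∈ @Finset.filter _ (fun z => G.connectedComponentMk z = c)
      (Classical.decPred _) Finset.univ, v z
  map_add' := by
    intro v w; funext c; simp [Finset.sum_add_distrib]
  map_smul' := by
    intro m v; funext c; simp [Finset.mul_sum]

/-- `ker (ρ_{0r})` for the (open) Vietoris–Rips graph `VR d r`. -/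
noncomputable def kerVR {Z : Type*} [Fintype Z] (d : Z → Z → ℝ≥0) (r : ℝ≥0) :
    Submodule (ZMod 2) (Z → ZMod 2) := LinearMap.ker (rho (VR d r))

/-- `ker⁺_b`: kernel of `ρ_{0b}`.  For `b > 0` this is `ker (ρ_{0b})` of `VR d b`;
at `b = 0` it is the span of the classes `[z_j] + [z_i]` with `d z_i z_j = 0`. -/
noncomputable def kerP {Z : Type*} [Fintype Z] (d : Z → Z → ℝ≥0) (b : ℝ≥0) :
    Submodule (ZMod 2) (Z → ZMod 2) := LinearMap.ker (rho (VRc d b))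

/-- `ker⁻_b = ⋃_{0 ≤ r < b} ker (ρ_{0r})`, as a submodule (the union is increasing). -/
noncomputable def kerM {Z : Type*} [Fintype Z] (d : Z → Z → ℝ≥0) (b : ℝ≥0) :
    Submodule (ZMod 2) (Z → ZMod 2) := ⨆ r : {r : ℝ≥0 // r < b}, kerVR d (r : ℝ≥0)

/-- Multiplicity of the death value `a` in the barcode: `m(a) = dim ker⁺_a − dim ker⁻_a`. -/
noncomputable def mult {Z : Type*} [Fintype Z] (d : Z → Z → ℝ≥0) (a : ℝ≥0) : ℕ :=
  finrank (ZMod 2) (kerP d a) - finrank (ZMod 2) (kerM d a)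

/-- The induced block function `M_f(a,b)` for the identity relabelling bijection
`f : (Fin n, dX) → (Fin n, dZ)`, `x_i ↦ z_i` (so that `f₀ = id` on `H₀(VR₀)`):
`dim ((f₀ ker⁺_a(X) ∩ ker⁺_b(Z)) / (f₀ ker⁻_a(X) ∩ ker⁺_b(Z) + f₀ ker⁺_a(X) ∩ ker⁻_b(Z)))`. -/
noncomputable def blockFn {Z : Type*} [Fintype Z] (dX dZ : Z → Z → ℝ≥0) (a b : ℝ≥0) : ℕ :=
  finrank (ZMod 2)
    ((↥(kerP dX a ⊓ kerP dZ b)) ⧸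
      ((kerM dX a ⊓ kerP dZ b ⊔ kerP dX a ⊓ kerM dZ b).comap
        (kerP dX a ⊓ kerP dZ b).subtype))

lemma rho_apply {Z : Type*} [Fintype Z] (G : SimpleGraph Z) (v : Z → ZMod 2)
    (c : G.ConnectedComponent) :
    rho G v c = ∑ z ∈ @Finset.filter _ (fun z => G.connectedComponentMk z = c)
      (Classical.decPred _) Finset.univ, v z := rfl

lemma ker_rho_mono {Z : Type*} [Fintype Z] {G G' : SimpleGraph Z} (h : G ≤ G') :
    LinearMap.ker (rho G) ≤ LinearMap.ker (rho G') := by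
  classical
  intro v hv
  rw [LinearMap.mem_ker] at hv ⊢
  funext c'
  have hmk : ∀ z, G'.connectedComponentMk z =
      (G.connectedComponentMk z).map (SimpleGraph.Hom.ofLE h) := fun z => rfl
  set φ : G.ConnectedComponent → G'.ConnectedComponent :=
    fun c => c.map (SimpleGraph.Hom.ofLE h) with hφ
  have key := Finset.sum_fiberwise_eq_sum_filter (Finset.univ : Finset Z)
      (Finset.univ.filter fun c => φ c = c') (fun z => G.connectedComponentMk z) v
  have h1 : rho G' v c' =
      ∑ c ∈ Finset.univ.filter (fun c => φ c = c'),
        ∑ z ∈ Finset.univ.filter (fun z => G.connectedComponentMk z = c), v z := by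
    rw [key, rho_apply]
    apply Finset.sum_congr _ (fun _ _ => rfl)
    apply Finset.filter_congr
    intro z _
    simp only [Finset.mem_filter, Finset.mem_univ, true_and]
    exact Iff.rfl
  rw [h1]
  apply Finset.sum_eq_zero
  intro c _
  have := congrFun hv c
  rw [rho_apply] at this
  rw [show (0 : G.ConnectedComponent → ZMod 2) c = 0 from rfl] at this
  rw [← this]

lemma ker_rho_bot {Z : Type*} [Fintype Z] :
    LinearMap.ker (rho (⊥ : SimpleGraph Z)) = ⊥ := by
  classical
  rw [eq_bot_iff]
  intro v hv
  rw [LinearMap.mem_ker] at hv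
  simp only [Submodule.mem_bot]
  funext z
  have := congrFun hv ((⊥ : SimpleGraph Z).connectedComponentMk z)
  rw [rho_apply] at this
  have hfil : (@Finset.filter _
      (fun z' => (⊥ : SimpleGraph Z).connectedComponentMk z' =
        (⊥ : SimpleGraph Z).connectedComponentMk z) (Classical.decPred _) Finset.univ) = {z} := by
    ext z'
    simp [SimpleGraph.ConnectedComponent.eq, SimpleGraph.reachable_bot]
  rw [hfil, Finset.sum_singleton] at this
  simpa using this

lemma ker_rho_congr {Z : Type*} [Fintype Z] {G G' : SimpleGraph Z} (h : G = G') :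
    LinearMap.ker (rho G) = LinearMap.ker (rho G') := by subst h; rfl

/-- shifting the symmetric function by `δ` shifts the kernels and the
barcode: `ker⁺_{a+δ}(X^δ) = ker⁺_a(X)`, `ker⁻_{a+δ}(X^δ) = ker⁻_a(X)` for all `a`,
and `m^{X^δ}(a+δ) = m^X(a)` for all `a > 0`. -/
theorem stmt19 {X : Type*} [Fintype X] (d : X → X → ℝ≥0)
    (hsym : ∀ x x', d x x' = d x' x) (δ : ℝ≥0) :
    (∀ a : ℝ≥0,
      kerP (fun x y => d x y + δ) (a + δ) = kerP d a ∧
      kerM (fun x y => d x y + δ) (a + δ) = kerM d a) ∧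
    (∀ a : ℝ≥0, 0 < a → mult (fun x y => d x y + δ) (a + δ) = mult d a) := by
  
  classical
  have hVRc : ∀ a : ℝ≥0, VRc (fun x y => d x y + δ) (a + δ) = VRc d a := by
    intro a; ext x y
    simp only [VRc, add_le_add_iff_right]
  have hkerVR0 : ∀ e : X → X → ℝ≥0, kerVR e 0 = ⊥ := by
    intro e
    have hg : VR e 0 = ⊥ := by
      apply le_bot_iff.mp
      rintro x y ⟨-, hpos, -, -⟩
      exact absurd hpos (lt_irrefl 0)
    show LinearMap.ker (rho (VR e 0)) = ⊥
    rw [ker_rho_congr hg, ker_rho_bot]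
  have hM : ∀ a : ℝ≥0, kerM (fun x y => d x y + δ) (a + δ) = kerM d a := by
    intro a
    apply le_antisymm
    · apply iSup_le
      rintro ⟨r, hr⟩
      show LinearMap.ker (rho (VR (fun x y => d x y + δ) r)) ≤ kerM d a
      rcases lt_trichotomy r δ with hrδ | hrδ | hrδ
      · have hg : VR (fun x y => d x y + δ) r = ⊥ := by
          apply le_bot_iff.mp
          rintro x y ⟨-, -, hle, -⟩
          exact absurd (le_trans le_add_self hle) (not_le.mpr hrδ)
        rw [ker_rho_congr hg, ker_rho_bot]
        exact bot_le
      · have ha : 0 < a := (lt_add_iff_pos_left δ).mp (hrδ ▸ hr)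
        have hle : VR (fun x y => d x y + δ) r ≤ VR d (a / 2) := by
          rintro x y ⟨hne, hpos, h1, h2⟩
          have hd1 : d x y = 0 :=
            le_zero_iff.mp (add_le_iff_nonpos_left.mp (le_trans h1 hrδ.le))
          have hd2 : d y x = 0 :=
            le_zero_iff.mp (add_le_iff_nonpos_left.mp (le_trans h2 hrδ.le))
          exact ⟨hne, by positivity, by simp [hd1], by simp [hd2]⟩
        refine le_trans (ker_rho_mono hle) ?_
        exact le_iSup (fun r : {r : ℝ≥0 // r < a} => kerVR d (r : ℝ≥0))
          ⟨a / 2, NNReal.half_lt_self ha.ne'⟩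
      · have hg : VR (fun x y => d x y + δ) r = VR d (r - δ) := by
          ext x y
          simp only [VR]
          constructor
          · rintro ⟨hne, -, h1, h2⟩
            exact ⟨hne, tsub_pos_of_lt hrδ, (le_tsub_iff_right hrδ.le).mpr h1,
              (le_tsub_iff_right hrδ.le).mpr h2⟩
          · rintro ⟨hne, -, h1, h2⟩
            exact ⟨hne, lt_of_le_of_lt (zero_le : 0 ≤ δ) hrδ, (le_tsub_iff_right hrδ.le).mp h1,
              (le_tsub_iff_right hrδ.le).mp h2⟩
        rw [ker_rho_congr hg]
        have hlt : r - δ < a := (tsub_lt_iff_right hrδ.le).mpr hr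
        exact le_iSup (fun r : {r : ℝ≥0 // r < a} => kerVR d (r : ℝ≥0)) ⟨r - δ, hlt⟩
    · apply iSup_le
      rintro ⟨r, hr⟩
      show LinearMap.ker (rho (VR d r)) ≤ kerM (fun x y => d x y + δ) (a + δ)
      rcases eq_or_lt_of_le (zero_le : 0 ≤ r) with hr0 | hr0
      · have := hkerVR0 d
        rw [show r = (0 : ℝ≥0) from hr0.symm]
        rw [show LinearMap.ker (rho (VR d 0)) = kerVR d 0 from rfl, hkerVR0 d]
        exact bot_le
      · have hg : VR d r = VR (fun x y => d x y + δ) (r + δ) := by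
          ext x y
          simp only [VR, add_le_add_iff_right]
          constructor
          · rintro ⟨hne, -, h1, h2⟩
            exact ⟨hne, lt_of_lt_of_le hr0 le_self_add, h1, h2⟩
          · rintro ⟨hne, -, h1, h2⟩
            exact ⟨hne, hr0, h1, h2⟩
        rw [ker_rho_congr hg]
        exact le_iSup (fun r : {r : ℝ≥0 // r < a + δ} =>
          kerVR (fun x y => d x y + δ) (r : ℝ≥0)) ⟨r + δ, add_lt_add_of_lt_of_le hr le_rfl⟩
  have hP : ∀ a : ℝ≥0, kerP (fun x y => d x y + δ) (a + δ) = kerP d a :=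
    fun a => ker_rho_congr (hVRc a)
  refine ⟨fun a => ⟨hP a, hM a⟩, fun a _ => ?_⟩
  unfold mult
  rw [hP a, hM a]
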